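/- If H and J are cognate atomic hypergraphs, then H and J have exactly the same constructions. -/

import Mathlib

namespace HG

variable {α : Type*} [DecidableEq α]

/-- The carrier of a hypergraph: the union of its members. -/
def carrier (H : Finset (Finset α)) : Finset α := H.sup id

/-- A hypergraph (on its carrier) is a finite family of sets not containing `∅`. -/
def IsHypergraph (H : Finset (Finset α)) : Prop := ∅ ∉ H

/-- The restriction `H_Y = {X ∈ H ∣ X ⊆ Y}`. -/
def restrict (H : Finset (Finset α)) (Y : Finset α) : Finset (Finset α) :=
  H.filter (· ⊆ Y)

/-- `x` and `y` are joined by a path of `H`: a nonempty sequence of distinct members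
of `H`, consecutive members intersecting, the first containing `x`, the last `y`. -/
def Joined (H : Finset (Finset α)) (x y : α) : Prop :=
  ∃ (X : Finset α) (l : List (Finset α)),
    (X :: l).Nodup ∧ (∀ Z ∈ X :: l, Z ∈ H) ∧
    (X :: l).Chain' (fun A B => (A ∩ B).Nonempty) ∧
    x ∈ X ∧ y ∈ (X :: l).getLast (List.cons_ne_nil X l)

/-- Path-connectedness of a hypergraph: any two carrier elements are joined. -/
def Conn (H : Finset (Finset α)) : Prop :=
  ∀ x ∈ carrier H, ∀ y ∈ carrier H, Joined H x y

/-- `P` is a hypergraph partition of `H`: a partition of `H` whose family of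
carriers is a partition of the carrier of `H`. -/
def IsHGPartition (H : Finset (Finset α)) (P : Finset (Finset (Finset α))) : Prop :=
  (∀ Q ∈ P, Q ≠ ∅) ∧
  (∀ Q ∈ P, ∀ Q' ∈ P, Q ≠ Q' → Disjoint Q Q') ∧
  P.sup id = H ∧
  (∀ Q ∈ P, ∀ Q' ∈ P, Q ≠ Q' → Disjoint (carrier Q) (carrier Q'))

/-- A hypergraph is atomic when it contains all singletons of carrier elements. -/
def Atomic (H : Finset (Finset α)) : Prop := ∀ x ∈ carrier H, {x} ∈ H

/-- A hypergraph is saturated when intersecting members have their union in it. -/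
def Saturated (H : Finset (Finset α)) : Prop :=
  ∀ X ∈ H, ∀ Y ∈ H, (X ∩ Y).Nonempty → X ∪ Y ∈ H

/-- `Y` is dispensable in `H` when `(H_Y) \ {Y}` is a connected hypergraph on `Y`. -/
def Dispensable (H : Finset (Finset α)) (Y : Finset α) : Prop :=
  IsHypergraph ((restrict H Y).erase Y) ∧
  carrier ((restrict H Y).erase Y) = Y ∧
  Conn ((restrict H Y).erase Y)

/-- `J` enhances `H` when `J = H ∪ {Y}` for some `Y ∉ H` dispensable in `H`. -/
def Enhances (J H : Finset (Finset α)) : Prop :=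
  ∃ Y, Dispensable H Y ∧ Y ∉ H ∧ J = insert Y H

/-- Cognation: the equivalence closure of the enhancement relation. -/
def Cognate (H J : Finset (Finset α)) : Prop :=
  Relation.EqvGen Enhances H J

/-- The finest hypergraph partition: one all of whose parts are connected. -/
def FinestHGPartition (H : Finset (Finset α)) (P : Finset (Finset (Finset α))) : Prop :=
  IsHGPartition H P ∧ ∀ Q ∈ P, Conn Q

/-- Constructions of a hypergraph, defined recursively. -/
inductive IsConstruction : Finset (Finset α) → Finset (Finset α) → Prop
  | empty : IsConstruction ∅ ∅
  | conn {H K : Finset (Finset α)} {x : α} :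
      (carrier H).Nonempty → Conn H → x ∈ carrier H →
      IsConstruction (restrict H ((carrier H).erase x)) K →
      IsConstruction H (insert (carrier H) K)
  | parts {H : Finset (Finset α)} {P : Finset (Finset (Finset α))}
      {K : Finset (Finset α) → Finset (Finset α)} :
      2 ≤ (carrier H).card → ¬ Conn H → 2 ≤ P.card → FinestHGPartition H P →
      (∀ Q ∈ P, IsConstruction Q (K Q)) →
      IsConstruction H (P.sup K)

/-- An `M`-antichain: at least two members of `M`, pairwise incomparable. -/
def IsAntichainIn (M S : Finset (Finset α)) : Prop :=
  S ⊆ M ∧ 2 ≤ S.card ∧ ∀ X ∈ S, ∀ Y ∈ S, X ≠ Y → ¬ X ⊆ Y ∧ ¬ Y ⊆ X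

/-- `S` misses `H` when the union of `S` is not a member of `H`. -/
def Misses (H S : Finset (Finset α)) : Prop := S.sup id ∉ H

/-- `x` is `X`-superficial relative to `M`. -/
def Superficial (M : Finset (Finset α)) (X : Finset α) (x : α) : Prop :=
  x ∈ X ∧ ∀ Y ∈ M, Y ⊂ X → x ∉ Y

/-- ASC-hypergraph: atomic, saturated and connected hypergraph. -/
def ASC (H : Finset (Finset α)) : Prop :=
  IsHypergraph H ∧ Atomic H ∧ Saturated H ∧ Conn H

end HG

namespace HG
variable {α : Type*} [DecidableEq α]


-- basic carrier lemmas
lemma subset_carrier {H : Finset (Finset α)} {X : Finset α} (h : X ∈ H) : X ⊆ carrier H :=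
  Finset.le_sup (f := id) h

lemma mem_carrier {H : Finset (Finset α)} {x : α} :
    x ∈ carrier H ↔ ∃ X ∈ H, x ∈ X := by
  simp [carrier, Finset.mem_sup]

lemma carrier_mono {H H' : Finset (Finset α)} (h : H ⊆ H') : carrier H ⊆ carrier H' :=
  Finset.le_iff_subset.mp (Finset.sup_mono h)

lemma carrier_insert (Y : Finset α) (H : Finset (Finset α)) :
    carrier (insert Y H) = Y ∪ carrier H := by
  simp [carrier, Finset.sup_insert]

lemma carrier_empty : carrier (∅ : Finset (Finset α)) = ∅ := rfl

lemma carrier_eq_empty {H : Finset (Finset α)} (hH : ∅ ∉ H) (h : carrier H = ∅) : H = ∅ := by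
  by_contra hne
  obtain ⟨X, hX⟩ := Finset.nonempty_iff_ne_empty.2 hne
  have hXne : X ≠ ∅ := by rintro rfl; exact hH hX
  obtain ⟨x, hx⟩ := Finset.nonempty_iff_ne_empty.2 hXne
  have := subset_carrier hX hx
  simp [h] at this

-- restrict lemmas
lemma restrict_subset (H : Finset (Finset α)) (S : Finset α) : restrict H S ⊆ H :=
  Finset.filter_subset _ _

lemma mem_restrict {H : Finset (Finset α)} {S X : Finset α} :
    X ∈ restrict H S ↔ X ∈ H ∧ X ⊆ S := by simp [restrict]

lemma carrier_restrict_subset (H : Finset (Finset α)) (S : Finset α) :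
    carrier (restrict H S) ⊆ S := by
  intro x hx
  obtain ⟨X, hX, hxX⟩ := mem_carrier.1 hx
  exact (mem_restrict.1 hX).2 hxX

lemma restrict_insert_of_subset {H : Finset (Finset α)} {Y S : Finset α} (h : Y ⊆ S) :
    restrict (insert Y H) S = insert Y (restrict H S) := by
  simp [restrict, Finset.filter_insert, h]

lemma restrict_insert_of_not_subset {H : Finset (Finset α)} {Y S : Finset α} (h : ¬ Y ⊆ S) :
    restrict (insert Y H) S = restrict H S := by
  simp [restrict, Finset.filter_insert, h]

lemma restrict_restrict {H : Finset (Finset α)} {Y S : Finset α} (h : Y ⊆ S) :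
    restrict (restrict H S) Y = restrict H Y := by
  ext X
  simp only [mem_restrict, and_assoc]
  constructor
  · rintro ⟨h1, _, h3⟩; exact ⟨h1, h3⟩
  · rintro ⟨h1, h3⟩; exact ⟨h1, h3.trans h, h3⟩




def Step (H : Finset (Finset α)) (A B : Finset α) : Prop :=
  A ∈ H ∧ B ∈ H ∧ (A ∩ B).Nonempty

def Reach (H : Finset (Finset α)) : Finset α → Finset α → Prop :=
  Relation.ReflTransGen (Step H)

def JR (H : Finset (Finset α)) (x y : α) : Prop :=
  ∃ X Z, X ∈ H ∧ Z ∈ H ∧ x ∈ X ∧ y ∈ Z ∧ Reach H X Z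

lemma chain_to_reach {H : Finset (Finset α)} :
    ∀ (l : List (Finset α)) (h : l ≠ []), (∀ A ∈ l, A ∈ H) →
      l.Chain' (fun A B => (A ∩ B).Nonempty) →
      Reach H (l.head h) (l.getLast h) := by
  intro l
  induction l with
  | nil => intro h; exact absurd rfl h
  | cons X l ih =>
    intro _ hmem hch
    cases l with
    | nil => exact Relation.ReflTransGen.refl
    | cons B t =>
      have h1 : Step H X B := ⟨hmem X (by simp), hmem B (by simp), hch.rel_head⟩
      have h2 := ih (by simp) (fun A hA => hmem A (List.mem_cons_of_mem _ hA)) hch.tail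
      refine Relation.ReflTransGen.trans (Relation.ReflTransGen.single h1) ?_
      simpa [List.getLast_cons, Reach] using h2

lemma jr_of_joined {H : Finset (Finset α)} {x y : α} (h : Joined H x y) : JR H x y := by
  obtain ⟨X, l, _, hmem, hch, hx, hy⟩ := h
  exact ⟨X, (X :: l).getLast (by simp), hmem X (by simp),
    hmem _ (List.getLast_mem _), hx, hy, by
      simpa using chain_to_reach (X :: l) (by simp) hmem hch⟩

/-- From reachability produce a nodup chain with prescribed endpoints. -/
lemma reach_to_chain {H : Finset (Finset α)} {X Z : Finset α} (hX : X ∈ H)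
    (h : Reach H X Z) :
    ∃ (l : List (Finset α)) (hne : l ≠ []), l.Nodup ∧ (∀ A ∈ l, A ∈ H) ∧
      l.Chain' (fun A B => (A ∩ B).Nonempty) ∧ l.head hne = X ∧ l.getLast hne = Z := by
  induction h with
  | refl => exact ⟨[X], by simp, by simp, by simpa using hX, List.isChain_singleton _, rfl, rfl⟩
  | tail hab hbc ih =>
    obtain ⟨l, hne, hnd, hmem, hch, hhd, hlast⟩ := ih
    rename_i B C
    obtain ⟨hB, hC, hint⟩ := hbc
    by_cases hCl : C ∈ l
    · obtain ⟨s, t, rfl⟩ := List.append_of_mem hCl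
      refine ⟨s ++ [C], by simp, ?_, ?_, ?_, ?_, ?_⟩
      · exact hnd.sublist (((List.nil_sublist t).cons_cons C).append_left s)
      · intro A hA
        exact hmem A (by
          rcases List.mem_append.1 hA with h | h
          · exact List.mem_append.2 (Or.inl h)
          · simp at h; subst h; exact List.mem_append.2 (Or.inr (by simp)))
      · exact (List.isChain_split.1 hch).1
      · cases s with
        | nil => simpa using hhd
        | cons a s => simpa using hhd
      · simp
    · refine ⟨l ++ [C], by simp, ?_, ?_, ?_, ?_, ?_⟩
      · simpa [List.nodup_append] using ⟨hnd, fun a ha h => hCl (h ▸ ha)⟩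
      · intro A hA
        rcases List.mem_append.1 hA with h | h
        · exact hmem A h
        · simp at h; subst h; exact hC
      · refine List.isChain_append.2 ⟨hch, by simp, ?_⟩
        intro a ha b hb
        simp at hb; subst hb
        rw [List.getLast?_eq_getLast hne] at ha
        simp at ha; subst ha
        rw [hlast]; exact hint
      · rw [List.head_append_of_ne_nil]; exact hhd
      · simp

lemma joined_of_jr {H : Finset (Finset α)} {x y : α} (h : JR H x y) : Joined H x y := by
  obtain ⟨X, Z, hX, hZ, hx, hy, hr⟩ := h
  obtain ⟨l, hne, hnd, hmem, hch, hhd, hlast⟩ := reach_to_chain hX hr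
  cases l with
  | nil => exact absurd rfl hne
  | cons W t =>
    simp only [List.head_cons] at hhd
    subst hhd
    exact ⟨W, t, hnd, hmem, hch, hx, by rw [hlast]; exact hy⟩

lemma joined_iff_jr {H : Finset (Finset α)} {x y : α} : Joined H x y ↔ JR H x y :=
  ⟨jr_of_joined, joined_of_jr⟩


lemma joined_mono {H H' : Finset (Finset α)} (h : H ⊆ H') {x y : α}
    (hj : Joined H x y) : Joined H' x y := by
  obtain ⟨X, l, h1, h2, h3, h4, h5⟩ := hj
  exact ⟨X, l, h1, fun Z hZ => h (h2 Z hZ), h3, h4, h5⟩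

lemma jr_trans {H : Finset (Finset α)} {x y z : α}
    (h1 : JR H x y) (h2 : JR H y z) : JR H x z := by
  obtain ⟨X, Z, hX, hZ, hx, hy, hr⟩ := h1
  obtain ⟨X', Z', hX', hZ', hy', hz, hr'⟩ := h2
  exact ⟨X, Z', hX, hZ', hx, hz,
    hr.trans ((Relation.ReflTransGen.single ⟨hZ, hX', y, by simp [hy, hy']⟩).trans hr')⟩

lemma jr_of_mem {H : Finset (Finset α)} {C : Finset α} (hC : C ∈ H) {x y : α}
    (hx : x ∈ C) (hy : y ∈ C) : JR H x y :=
  ⟨C, C, hC, hC, hx, hy, Relation.ReflTransGen.refl⟩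

/-- basic facts from dispensability -/
lemma Dispensable.G_eq {H : Finset (Finset α)} {Y : Finset α} (hY : Y ∉ H) :
    (restrict H Y).erase Y = restrict H Y := by
  apply Finset.erase_eq_of_notMem
  intro h
  exact hY (mem_restrict.1 h).1

lemma Dispensable.carrier_G {H : Finset (Finset α)} {Y : Finset α}
    (hd : Dispensable H Y) (hY : Y ∉ H) : carrier (restrict H Y) = Y := by
  rw [← Dispensable.G_eq hY]; exact hd.2.1

lemma Dispensable.subset_carrier' {H : Finset (Finset α)} {Y : Finset α}
    (hd : Dispensable H Y) (hY : Y ∉ H) : Y ⊆ carrier H := by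
  rw [← hd.carrier_G hY]
  exact Finset.le_iff_subset.mp (Finset.sup_mono (restrict_subset H Y))

lemma Dispensable.carrier_insert_eq {H : Finset (Finset α)} {Y : Finset α}
    (hd : Dispensable H Y) (hY : Y ∉ H) : carrier (insert Y H) = carrier H := by
  rw [carrier_insert, Finset.union_eq_right.2 (hd.subset_carrier' hY)]

/-- all elements of `Y` are pairwise joined in `H` -/
lemma Dispensable.jr_of_mem_Y {H : Finset (Finset α)} {Y : Finset α}
    (hd : Dispensable H Y) (hY : Y ∉ H) {a b : α} (ha : a ∈ Y) (hb : b ∈ Y) :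
    JR H a b := by
  have hconn := hd.2.2
  rw [Dispensable.G_eq hY] at hconn
  have hcar := hd.carrier_G hY
  have := hconn a (by rw [hcar]; exact ha) b (by rw [hcar]; exact hb)
  obtain ⟨X, Z, hX, hZ, hx, hy, hr⟩ := jr_of_joined this
  exact ⟨X, Z, (restrict_subset H Y) hX, (restrict_subset H Y) hZ, hx, hy,
    Relation.ReflTransGen.mono (r := Step (restrict H Y)) (p := Step H) (fun A B ⟨h1, h2, h3⟩ => ⟨(restrict_subset H Y) h1, (restrict_subset H Y) h2, h3⟩) X Z hr⟩

lemma Dispensable.jr_insert {H : Finset (Finset α)} {Y : Finset α}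
    (hd : Dispensable H Y) (hY : Y ∉ H) {x y : α}
    (h : JR (insert Y H) x y) : JR H x y := by
  have hmem : ∀ C ∈ insert Y H, ∀ a ∈ C, ∀ b ∈ C, JR H a b := by
    intro C hC a ha b hb
    rcases Finset.mem_insert.1 hC with rfl | hC
    · exact hd.jr_of_mem_Y hY ha hb
    · exact jr_of_mem hC ha hb
  obtain ⟨X, Z, hX, hZ, hx, hy, hr⟩ := h
  have key : ∀ Z, Reach (insert Y H) X Z → ∀ b ∈ Z, JR H x b := by
    intro Z hr
    induction hr with
    | refl => exact fun b hb => hmem X hX x hx b hb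
    | @tail B C hab hbc ih =>
      intro b hb
      obtain ⟨hB, hC, t, ht⟩ := hbc
      simp only [Finset.mem_inter] at ht
      exact jr_trans (ih t ht.1) (hmem C hC t ht.2 b hb)
  exact key Z hr y hy

lemma Dispensable.joined_insert_iff {H : Finset (Finset α)} {Y : Finset α}
    (hd : Dispensable H Y) (hY : Y ∉ H) {x y : α} :
    Joined (insert Y H) x y ↔ Joined H x y := by
  constructor
  · intro h
    exact joined_of_jr (hd.jr_insert hY (jr_of_joined h))
  · exact joined_mono (Finset.subset_insert _ _)

lemma Dispensable.conn_insert_iff {H : Finset (Finset α)} {Y : Finset α}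
    (hd : Dispensable H Y) (hY : Y ∉ H) :
    Conn (insert Y H) ↔ Conn H := by
  unfold Conn
  rw [hd.carrier_insert_eq hY]
  constructor
  · intro h x hx y hy
    exact (hd.joined_insert_iff hY).1 (h x hx y hy)
  · intro h x hx y hy
    exact (hd.joined_insert_iff hY).2 (h x hx y hy)

lemma Dispensable.restrict {H : Finset (Finset α)} {Y S : Finset α}
    (hd : Dispensable H Y) (h : Y ⊆ S) : Dispensable (HG.restrict H S) Y := by
  obtain ⟨h1, h2, h3⟩ := hd
  rw [Dispensable, restrict_restrict h]
  exact ⟨h1, h2, h3⟩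

/- partition helpers -/

lemma part_subset {H : Finset (Finset α)} {P : Finset (Finset (Finset α))}
    (hP : IsHGPartition H P) {Q : Finset (Finset α)} (hQ : Q ∈ P) : Q ⊆ H := by
  intro A hA
  rw [← hP.2.2.1]
  exact Finset.mem_sup.2 ⟨Q, hQ, hA⟩

lemma mem_part {H : Finset (Finset α)} {P : Finset (Finset (Finset α))}
    (hP : IsHGPartition H P) {A : Finset α} (hA : A ∈ H) : ∃ Q ∈ P, A ∈ Q := by
  rw [← hP.2.2.1] at hA
  exact Finset.mem_sup.1 hA

lemma part_unique {H : Finset (Finset α)} {P : Finset (Finset (Finset α))}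
    (hP : IsHGPartition H P) {Q Q' : Finset (Finset α)} (hQ : Q ∈ P) (hQ' : Q' ∈ P)
    {A B : Finset α} (hA : A ∈ Q) (hB : B ∈ Q') (hint : (A ∩ B).Nonempty) : Q = Q' := by
  by_contra hne
  have hdis := hP.2.2.2 Q hQ Q' hQ' hne
  obtain ⟨t, ht⟩ := hint
  simp only [Finset.mem_inter] at ht
  exact (Finset.disjoint_left.1 hdis (subset_carrier hA ht.1)) (subset_carrier hB ht.2)

lemma reach_mem_part {H : Finset (Finset α)} {P : Finset (Finset (Finset α))}
    (hP : IsHGPartition H P) {Q : Finset (Finset α)} (hQ : Q ∈ P)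
    {A B : Finset α} (hA : A ∈ Q) (hr : Reach H A B) : B ∈ Q := by
  induction hr with
  | refl => exact hA
  | tail hab hbc ih =>
    obtain ⟨h1, h2, h3⟩ := hbc
    obtain ⟨Q', hQ', hC⟩ := mem_part hP h2
    rwa [part_unique hP hQ hQ' ih hC h3]

lemma Dispensable.reach_G {H : Finset (Finset α)} {Y : Finset α}
    (hd : Dispensable H Y) (hY : Y ∉ H) (hH : ∅ ∉ H)
    {A B : Finset α} (hA : A ∈ HG.restrict H Y) (hB : B ∈ HG.restrict H Y) :
    Reach H A B := by
  obtain ⟨hAH, hAY⟩ := mem_restrict.1 hA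
  obtain ⟨hBH, hBY⟩ := mem_restrict.1 hB
  obtain ⟨a, ha⟩ := Finset.nonempty_iff_ne_empty.2 (fun h => hH (h ▸ hAH))
  obtain ⟨b, hb⟩ := Finset.nonempty_iff_ne_empty.2 (fun h => hH (h ▸ hBH))
  obtain ⟨X, Z, hX, hZ, haX, hbZ, hr⟩ := hd.jr_of_mem_Y hY (hAY ha) (hBY hb)
  refine (Relation.ReflTransGen.single ⟨hAH, hX, a, ?_⟩).trans
    (hr.trans (Relation.ReflTransGen.single ⟨hZ, hBH, b, ?_⟩)) <;>
    simp [ha, haX, hb, hbZ]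

lemma G_subset_part {H : Finset (Finset α)} {Y : Finset α}
    (hd : Dispensable H Y) (hY : Y ∉ H) (hH : ∅ ∉ H)
    {P : Finset (Finset (Finset α))} (hP : IsHGPartition H P)
    {Q : Finset (Finset α)} (hQ : Q ∈ P) {A : Finset α}
    (hA : A ∈ Q) (hAG : A ∈ HG.restrict H Y) : HG.restrict H Y ⊆ Q :=
  fun B hB => reach_mem_part hP hQ hA (hd.reach_G hY hH hAG hB)

lemma dispensable_congr {H A : Finset (Finset α)} {Y : Finset α}
    (h : HG.restrict A Y = HG.restrict H Y) (hd : Dispensable H Y) : Dispensable A Y := by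
  unfold Dispensable at *
  rw [h]
  exact hd

lemma part_carrier_lt {H : Finset (Finset α)} {P : Finset (Finset (Finset α))}
    (hP : IsHGPartition H P) (hH : ∅ ∉ H) (hPc : 2 ≤ P.card)
    {Q : Finset (Finset α)} (hQ : Q ∈ P) : (carrier Q).card < (carrier H).card := by
  obtain ⟨Q1, hQ1, hne⟩ := Finset.exists_mem_ne (lt_of_lt_of_le one_lt_two hPc) Q
  obtain ⟨W, hW⟩ := Finset.nonempty_iff_ne_empty.2 (hP.1 Q1 hQ1)
  have hWH : W ∈ H := part_subset hP hQ1 hW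
  obtain ⟨w, hw⟩ := Finset.nonempty_iff_ne_empty.2 (fun h => hH (h ▸ hWH))
  have hw1 : w ∈ carrier Q1 := subset_carrier hW hw
  have hwQ : w ∉ carrier Q := Finset.disjoint_left.1 (hP.2.2.2 Q1 hQ1 Q hQ hne) hw1
  refine Finset.card_lt_card ((Finset.ssubset_iff_of_subset
    (fun x hx => ?_)).2 ⟨w, ?_, hwQ⟩)
  · exact Finset.le_iff_subset.mp (Finset.sup_mono (part_subset hP hQ)) hx
  · exact Finset.le_iff_subset.mp (Finset.sup_mono (part_subset hP hQ1)) hw1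

lemma sup_id_insert (R : Finset (Finset α)) (P : Finset (Finset (Finset α))) :
    (insert R P).sup id = R ∪ P.sup id := by
  rw [Finset.sup_insert]; rfl

lemma replace_partition {H' : Finset (Finset α)} {P : Finset (Finset (Finset α))}
    {Q0 R : Finset (Finset α)}
    (hP : IsHGPartition ((P.sup id : Finset (Finset α))) P) (hQ0 : Q0 ∈ P) (hRne : R ≠ ∅)
    (hdis : ∀ Q ∈ P, Q ≠ Q0 → Disjoint R Q)
    (hcar : carrier R ⊆ carrier Q0)
    (hsup : (insert R (P.erase Q0)).sup id = H') :
    IsHGPartition H' (insert R (P.erase Q0)) := by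
  refine ⟨?_, ?_, hsup, ?_⟩
  · intro Q hQ
    rcases Finset.mem_insert.1 hQ with rfl | hQ
    · exact hRne
    · exact hP.1 Q (Finset.mem_of_mem_erase hQ)
  · intro Q hQ Q' hQ' hne
    rcases Finset.mem_insert.1 hQ with hQR | hQe
    · rcases Finset.mem_insert.1 hQ' with hQ'R | hQ'e
      · exact absurd (hQR.trans hQ'R.symm) hne
      · subst hQR
        exact hdis Q' (Finset.mem_of_mem_erase hQ'e) (Finset.ne_of_mem_erase hQ'e)
    · rcases Finset.mem_insert.1 hQ' with hQ'R | hQ'e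
      · subst hQ'R
        exact (hdis Q (Finset.mem_of_mem_erase hQe) (Finset.ne_of_mem_erase hQe)).symm
      · exact hP.2.1 Q (Finset.mem_of_mem_erase hQe) Q' (Finset.mem_of_mem_erase hQ'e) hne
  · intro Q hQ Q' hQ' hne
    rcases Finset.mem_insert.1 hQ with hQR | hQe
    · rcases Finset.mem_insert.1 hQ' with hQ'R | hQ'e
      · exact absurd (hQR.trans hQ'R.symm) hne
      · subst hQR
        exact Finset.disjoint_of_subset_left hcar
          (hP.2.2.2 Q0 hQ0 Q' (Finset.mem_of_mem_erase hQ'e)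
            (Finset.ne_of_mem_erase hQ'e).symm)
    · rcases Finset.mem_insert.1 hQ' with hQ'R | hQ'e
      · subst hQ'R
        exact (Finset.disjoint_of_subset_left hcar
          (hP.2.2.2 Q0 hQ0 Q (Finset.mem_of_mem_erase hQe)
            (Finset.ne_of_mem_erase hQe).symm)).symm
      · exact hP.2.2.2 Q (Finset.mem_of_mem_erase hQe) Q' (Finset.mem_of_mem_erase hQ'e) hne

lemma step_insert : ∀ (n : ℕ) (H : Finset (Finset α)) (Y : Finset α),
    (carrier H).card ≤ n → ∅ ∉ H → Y ∉ H → Y ≠ ∅ → Dispensable H Y →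
    ∀ K, IsConstruction H K ↔ IsConstruction (insert Y H) K := by
  intro n
  induction n with
  | zero =>
    intro H Y hcard hH hY hY0 hd K
    exfalso
    have h1 : carrier H = ∅ := Finset.card_eq_zero.1 (Nat.le_zero.1 hcard)
    exact hY0 (Finset.subset_empty.1 (h1 ▸ hd.subset_carrier' hY))
  | succ n IH =>
    intro H Y hcard hH hY hY0 hd K
    have hce : carrier (insert Y H) = carrier H := hd.carrier_insert_eq hY
    have hH' : ∅ ∉ insert Y H := by
      simp only [Finset.mem_insert, not_or]
      exact ⟨Ne.symm hY0, hH⟩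
    have hGne : (HG.restrict H Y).Nonempty := by
      refine Finset.nonempty_iff_ne_empty.2 (fun h => hY0 ?_)
      rw [← hd.carrier_G hY, h, carrier_empty]
    constructor
    · intro hK
      cases hK with
      | empty =>
        exfalso
        exact hY0 (Finset.subset_empty.1 (hd.subset_carrier' hY))
      | @conn _ K0 x hne hconn hx hK0 =>
        rw [← hce]
        refine IsConstruction.conn (x := x) (hce ▸ hne) ((hd.conn_insert_iff hY).2 hconn)
          (hce ▸ hx) ?_
        rw [hce]
        by_cases hYS : Y ⊆ (carrier H).erase x
        · rw [restrict_insert_of_subset hYS]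
          refine (IH (HG.restrict H ((carrier H).erase x)) Y ?_ ?_ ?_ hY0
            (hd.restrict hYS) K0).1 hK0
          · have h1 := Finset.card_le_card (carrier_restrict_subset H ((carrier H).erase x))
            have h3 : ((carrier H).erase x).card = (carrier H).card - 1 :=
              Finset.card_erase_of_mem hx
            have h4 : 1 ≤ (carrier H).card := Finset.card_pos.2 hne
            omega
          · intro hmem; exact hH (mem_restrict.1 hmem).1
          · intro hmem; exact hY (mem_restrict.1 hmem).1
        · rw [restrict_insert_of_not_subset hYS]
          exact hK0
      | @parts _ P Kf hcard2 hnconn hPc hfin hKs =>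
        obtain ⟨g0, hg0⟩ := hGne
        obtain ⟨C, hC, hg0C⟩ := mem_part hfin.1 ((restrict_subset H Y) hg0)
        have hGC : HG.restrict H Y ⊆ C := G_subset_part hd hY hH hfin.1 hC hg0C hg0
        have hresC : HG.restrict C Y = HG.restrict H Y := by
          ext X
          simp only [mem_restrict]
          exact ⟨fun h => ⟨part_subset hfin.1 hC h.1, h.2⟩,
                 fun h => ⟨hGC (mem_restrict.2 ⟨h.1, h.2⟩), h.2⟩⟩
        have hYC : Y ∉ C := fun h => hY (part_subset hfin.1 hC h)
        have hdC : Dispensable C Y := dispensable_congr hresC hd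
        have hC0 : ∅ ∉ C := fun h => hH (part_subset hfin.1 hC h)
        have hRnotin : insert Y C ∉ P.erase C := fun h =>
          hY (part_subset hfin.1 (Finset.mem_of_mem_erase h) (Finset.mem_insert_self Y C))
        have hcarR : carrier (insert Y C) = carrier C := hdC.carrier_insert_eq hYC
        have hsup : (insert (insert Y C) (P.erase C)).sup id = insert Y H := by
          rw [sup_id_insert, Finset.insert_union]
          congr 1
          calc C ∪ (P.erase C).sup id = (insert C (P.erase C)).sup id :=
                (sup_id_insert C (P.erase C)).symm
            _ = P.sup id := by rw [Finset.insert_erase hC]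
            _ = H := hfin.1.2.2.1
        have hP' : IsHGPartition (insert Y H) (insert (insert Y C) (P.erase C)) := by
          refine replace_partition ⟨hfin.1.1, hfin.1.2.1, rfl, hfin.1.2.2.2⟩ hC
            (Finset.insert_ne_empty Y C) ?_ (by rw [hcarR]) hsup
          intro Q hQ hne
          rw [Finset.disjoint_insert_left]
          exact ⟨fun h => hY (part_subset hfin.1 hQ h),
                 hfin.1.2.1 C hC Q hQ (Ne.symm hne)⟩
        have hfin' : FinestHGPartition (insert Y H) (insert (insert Y C) (P.erase C)) := by
          refine ⟨hP', fun Q hQ => ?_⟩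
          rcases Finset.mem_insert.1 hQ with rfl | hQe
          · exact (hdC.conn_insert_iff hYC).2 (hfin.2 C hC)
          · exact hfin.2 Q (Finset.mem_of_mem_erase hQe)
        have hsupK : (insert (insert Y C) (P.erase C)).sup
            (fun Q => if Q = insert Y C then Kf C else Kf Q) = P.sup Kf := by
          rw [Finset.sup_insert, if_pos rfl]
          have h2 : (P.erase C).sup (fun Q => if Q = insert Y C then Kf C else Kf Q)
              = (P.erase C).sup Kf :=
            Finset.sup_congr rfl (fun Q hQ => if_neg
              (fun h => hRnotin (by rw [← h]; exact hQ)))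
          rw [h2]
          conv_rhs => rw [← Finset.insert_erase hC, Finset.sup_insert]
        rw [← hsupK]
        refine IsConstruction.parts ?_ ?_ ?_ hfin' ?_
        · rwa [hce]
        · rw [hd.conn_insert_iff hY]; exact hnconn
        · rw [Finset.card_insert_of_notMem hRnotin, Finset.card_erase_of_mem hC]
          omega
        · intro Q hQ
          rcases Finset.mem_insert.1 hQ with rfl | hQe
          · rw [if_pos rfl]
            have hcc : (carrier C).card ≤ n := by
              have := part_carrier_lt hfin.1 hH hPc hC
              omega
            exact (IH C Y hcc hC0 hYC hY0 hdC (Kf C)).1 (hKs C hC)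
          · rw [if_neg (fun h => hRnotin (by rw [← h]; exact hQe))]
            exact hKs Q (Finset.mem_of_mem_erase hQe)
    · intro hK
      generalize hgen : insert Y H = W at hK
      cases hK with
      | empty => exact absurd hgen (Finset.insert_ne_empty Y H)
      | @conn _ K0 x hne hconn hx hK0 =>
        subst hgen
        rw [hce] at hne hx hK0 ⊢
        refine IsConstruction.conn hne ((hd.conn_insert_iff hY).1 hconn) hx ?_
        by_cases hYS : Y ⊆ (carrier H).erase x
        · rw [restrict_insert_of_subset hYS] at hK0
          refine (IH (HG.restrict H ((carrier H).erase x)) Y ?_ ?_ ?_ hY0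
            (hd.restrict hYS) K0).2 hK0
          · have h1 := Finset.card_le_card (carrier_restrict_subset H ((carrier H).erase x))
            have h3 : ((carrier H).erase x).card = (carrier H).card - 1 :=
              Finset.card_erase_of_mem hx
            have h4 : 1 ≤ (carrier H).card := Finset.card_pos.2 hne
            omega
          · intro hmem; exact hH (mem_restrict.1 hmem).1
          · intro hmem; exact hY (mem_restrict.1 hmem).1
        · rwa [restrict_insert_of_not_subset hYS] at hK0
      | @parts _ P' Kf hcard2 hnconn hPc hfin hKs =>
        subst hgen
        obtain ⟨Q0, hQ0, hYQ0⟩ := mem_part hfin.1 (Finset.mem_insert_self Y H)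
        have hQ0sub : Q0 ⊆ insert Y H := part_subset hfin.1 hQ0
        have hGQ0 : HG.restrict H Y ⊆ Q0.erase Y := by
          intro A hA
          obtain ⟨hAH, hAY⟩ := mem_restrict.1 hA
          refine Finset.mem_erase.2 ⟨fun h => hY (h ▸ hAH), ?_⟩
          obtain ⟨a, ha⟩ := Finset.nonempty_iff_ne_empty.2 (fun h => hH (h ▸ hAH))
          obtain ⟨QA, hQA, hAQA⟩ := mem_part hfin.1 (Finset.mem_insert_of_mem hAH)
          rwa [part_unique hfin.1 hQ0 hQA hYQ0 hAQA
            ⟨a, Finset.mem_inter.2 ⟨hAY ha, ha⟩⟩]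
        have hres : HG.restrict (Q0.erase Y) Y = HG.restrict H Y := by
          ext X
          simp only [mem_restrict, Finset.mem_erase]
          constructor
          · rintro ⟨⟨hXY, hXQ⟩, hXsub⟩
            rcases Finset.mem_insert.1 (hQ0sub hXQ) with rfl | h
            · exact absurd rfl hXY
            · exact ⟨h, hXsub⟩
          · rintro ⟨hXH, hXsub⟩
            exact ⟨Finset.mem_erase.1 (hGQ0 (mem_restrict.2 ⟨hXH, hXsub⟩)), hXsub⟩
        have hdQ0 : Dispensable (Q0.erase Y) Y := dispensable_congr hres hd
        have hYnQ0e : Y ∉ Q0.erase Y := Finset.notMem_erase Y Q0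
        have hQ0eq : insert Y (Q0.erase Y) = Q0 := Finset.insert_erase hYQ0
        have hcarQ0 : carrier (Q0.erase Y) = carrier Q0 :=
          (hdQ0.carrier_insert_eq hYnQ0e).symm.trans (congrArg carrier hQ0eq)
        obtain ⟨g0, hg0⟩ := hGne
        have hRne : Q0.erase Y ≠ ∅ := Finset.ne_empty_of_mem (hGQ0 hg0)
        have hRnotin : Q0.erase Y ∉ P'.erase Q0 := by
          intro h
          have h2 := hfin.1.2.1 (Q0.erase Y) (Finset.mem_of_mem_erase h) Q0 hQ0
            (Finset.ne_of_mem_erase h)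
          exact Finset.disjoint_left.1 h2 (hGQ0 hg0)
            (Finset.mem_of_mem_erase (hGQ0 hg0))
        have hYrest : Y ∉ (P'.erase Q0).sup id := by
          intro h
          obtain ⟨Q, hQ, hYQ⟩ := Finset.mem_sup.1 h
          exact Finset.disjoint_left.1 (hfin.1.2.1 Q (Finset.mem_of_mem_erase hQ) Q0 hQ0
            (Finset.ne_of_mem_erase hQ)) hYQ hYQ0
        have hsup : (insert (Q0.erase Y) (P'.erase Q0)).sup id = H := by
          rw [sup_id_insert]
          have h2 : Q0 ∪ (P'.erase Q0).sup id = insert Y H := by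
            rw [← sup_id_insert, Finset.insert_erase hQ0, hfin.1.2.2.1]
          have h3 := congrArg (fun s => Finset.erase s Y) h2
          rwa [Finset.erase_union_distrib, Finset.erase_eq_of_notMem hYrest,
            Finset.erase_insert hY] at h3
        have hP : IsHGPartition H (insert (Q0.erase Y) (P'.erase Q0)) := by
          refine replace_partition ⟨hfin.1.1, hfin.1.2.1, rfl, hfin.1.2.2.2⟩ hQ0 hRne
            ?_ (by rw [hcarQ0]) hsup
          intro Q hQ hne
          exact Finset.disjoint_of_subset_left (Finset.erase_subset Y Q0)
            (hfin.1.2.1 Q0 hQ0 Q hQ (Ne.symm hne))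
        have hfinH : FinestHGPartition H (insert (Q0.erase Y) (P'.erase Q0)) := by
          refine ⟨hP, fun Q hQ => ?_⟩
          rcases Finset.mem_insert.1 hQ with rfl | hQe
          · have hco := hfin.2 Q0 hQ0
            rw [← hQ0eq] at hco
            exact (hdQ0.conn_insert_iff hYnQ0e).1 hco
          · exact hfin.2 Q (Finset.mem_of_mem_erase hQe)
        have hsupK : (insert (Q0.erase Y) (P'.erase Q0)).sup
            (fun Q => if Q = Q0.erase Y then Kf Q0 else Kf Q) = P'.sup Kf := by
          rw [Finset.sup_insert, if_pos rfl]
          have h2 : (P'.erase Q0).sup (fun Q => if Q = Q0.erase Y then Kf Q0 else Kf Q)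
              = (P'.erase Q0).sup Kf :=
            Finset.sup_congr rfl (fun Q hQ => if_neg
              (fun h => hRnotin (by rw [← h]; exact hQ)))
          rw [h2]
          conv_rhs => rw [← Finset.insert_erase hQ0, Finset.sup_insert]
        rw [← hsupK]
        refine IsConstruction.parts ?_ ?_ ?_ hfinH ?_
        · rwa [← hce]
        · intro hCo; exact hnconn ((hd.conn_insert_iff hY).2 hCo)
        · rw [Finset.card_insert_of_notMem hRnotin, Finset.card_erase_of_mem hQ0]
          omega
        · intro Q hQ
          rcases Finset.mem_insert.1 hQ with rfl | hQe
          · rw [if_pos rfl]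
            have hKQ0 : IsConstruction (insert Y (Q0.erase Y)) (Kf Q0) := by
              rw [hQ0eq]; exact hKs Q0 hQ0
            have hcc : (carrier (Q0.erase Y)).card ≤ n := by
              have h5 := part_carrier_lt ⟨hfin.1.1, hfin.1.2.1, hfin.1.2.2.1,
                hfin.1.2.2.2⟩ hH' hPc hQ0
              rw [hce] at h5
              rw [hcarQ0]
              omega
            exact (IH (Q0.erase Y) Y hcc
              (fun h => hH' (hQ0sub (Finset.mem_of_mem_erase h))) hYnQ0e hY0 hdQ0
              (Kf Q0)).2 hKQ0
          · rw [if_neg (fun h => hRnotin (by rw [← h]; exact hQe))]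
            exact hKs Q (Finset.mem_of_mem_erase hQe)

lemma enhances_iff {A B : Finset (Finset α)} (h : Enhances A B) :
    ∀ K, IsConstruction (A.erase ∅) K ↔ IsConstruction (B.erase ∅) K := by
  obtain ⟨Y, hd, hY, rfl⟩ := h
  by_cases hY0 : Y = ∅
  · subst hY0
    rw [Finset.erase_insert hY, Finset.erase_eq_of_notMem hY]
    exact fun K => Iff.rfl
  · have hB0 : ∅ ∉ B := by
      intro h0
      exact hd.1 (Finset.mem_erase.2 ⟨Ne.symm hY0,
        mem_restrict.2 ⟨h0, Finset.empty_subset Y⟩⟩)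
    have hA0 : ∅ ∉ insert Y B := by
      simp only [Finset.mem_insert, not_or]
      exact ⟨Ne.symm hY0, hB0⟩
    rw [Finset.erase_eq_of_notMem hA0, Finset.erase_eq_of_notMem hB0]
    exact fun K => (step_insert ((carrier B).card) B Y le_rfl hB0 hY hY0 hd K).symm

end HG

open HG

theorem cognate_same_constructions
    {α : Type*} [DecidableEq α]
    (H J : Finset (Finset α)) (hH : IsHypergraph H) (hJ : IsHypergraph J)
    (hAH : Atomic H) (hAJ : Atomic J) (hc : Cognate H J) :
    ∀ K, IsConstruction H K ↔ IsConstruction J K := by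
  intro K
  have main : ∀ A B : Finset (Finset α), Relation.EqvGen Enhances A B →
      (IsConstruction (A.erase ∅) K ↔ IsConstruction (B.erase ∅) K) := by
    intro A B h
    induction h with
    | rel a b hab => exact enhances_iff hab K
    | refl a => exact Iff.rfl
    | symm a b _ ih => exact ih.symm
    | trans a b c _ _ ih1 ih2 => exact ih1.trans ih2
  have hmain := main H J hc
  rwa [Finset.erase_eq_of_notMem hH, Finset.erase_eq_of_notMem hJ] at hmain
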